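/- arXiv:1407.1268 — 4 statements merged into one kernel-verified Lean document; each statement's English description precedes it below -/
import Mathlib

section
/- Let U be a symmetric n×n matrix such that span{p₀,…,p_{k-2}} ⊆ null(U) (equivalently Upᵢ = 0 for i ≤ k-2) where span{p₀,…,p_{k-2}} = 𝒦_{k-1}(p₀,H), and range(U) ⊆ 𝒦_{k+1}(p₀,H). Then range(U) ⊆ 𝒦_{k-1}(p₀,H)^⊥ ∩ 𝒦_{k+1}(p₀,H) and rank(U) ≤ 2. -/
open Matrix

/-- The Krylov subspace `𝒦_k(b,H) = span{b, Hb, …, H^{k-1}b}`. -/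
def krylov {n : ℕ} (b : Fin n → ℝ) (H : Matrix (Fin n) (Fin n) ℝ) (k : ℕ) :
    Submodule ℝ (Fin n → ℝ) :=
  Submodule.span ℝ (Set.range fun i : Fin k => (H ^ (i : ℕ)) *ᵥ b)

/-- Dot product with a fixed vector, as a linear map. -/
def dotL {n : ℕ} (z : Fin n → ℝ) : (Fin n → ℝ) →ₗ[ℝ] ℝ where
  toFun x := x ⬝ᵥ z
  map_add' x y := add_dotProduct x y z
  map_smul' c x := smul_dotProduct c x z

/-- If a symmetric update matrix `U` annihilates `p₀,…,p_{k-2}` (which span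
`𝒦_{k-1}(p₀,H)`) and has range in `𝒦_{k+1}(p₀,H)`, then its range lies in
`𝒦_{k-1}(p₀,H)^⊥ ∩ 𝒦_{k+1}(p₀,H)` and `rank(U) ≤ 2`. -/
theorem range_in_perp_and_rank_le_two {n k : ℕ} (hk : 2 ≤ k)
    (H : Matrix (Fin n) (Fin n) ℝ) (p₀ : Fin n → ℝ)
    (p : ℕ → Fin n → ℝ) (hp0 : p 0 = p₀)
    (hspan : Submodule.span ℝ (Set.range fun i : Fin (k - 1) => p (i : ℕ)) =
      krylov p₀ H (k - 1))
    (hdim : ∀ j, j ≤ k + 1 → Module.finrank ℝ (krylov p₀ H j) = j)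
    (U : Matrix (Fin n) (Fin n) ℝ) (hUsymm : U.IsSymm)
    (hnull : ∀ i, i ≤ k - 2 → U *ᵥ p i = 0)
    (hrange : LinearMap.range U.mulVecLin ≤ krylov p₀ H (k + 1)) :
    (∀ y ∈ LinearMap.range U.mulVecLin,
      y ∈ krylov p₀ H (k + 1) ∧ ∀ z ∈ krylov p₀ H (k - 1), y ⬝ᵥ z = 0) ∧
    U.rank ≤ 2 := by
  set W := krylov p₀ H (k + 1) with hW
  set V := krylov p₀ H (k - 1) with hV
  have hVW : V ≤ W := by
    apply Submodule.span_mono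
    rintro _ ⟨i, rfl⟩
    exact ⟨⟨(i : ℕ), by omega⟩, rfl⟩
  -- U annihilates V
  have hker : V ≤ LinearMap.ker U.mulVecLin := by
    rw [← hspan, Submodule.span_le]
    rintro _ ⟨i, rfl⟩
    have hi : (i : ℕ) ≤ k - 2 := by omega
    simpa [LinearMap.mem_ker] using hnull (i : ℕ) hi
  -- orthogonality of range against V
  have horth : ∀ x : Fin n → ℝ, ∀ z ∈ V, (U *ᵥ x) ⬝ᵥ z = 0 := by
    intro x z hz
    have hUz : U *ᵥ z = 0 := hker hz
    have hvm : z ᵥ* U = U *ᵥ z := by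
      rw [← Matrix.mulVec_transpose, hUsymm.eq]
    calc (U *ᵥ x) ⬝ᵥ z = z ⬝ᵥ (U *ᵥ x) := dotProduct_comm _ _
      _ = (z ᵥ* U) ⬝ᵥ x := dotProduct_mulVec z U x
      _ = (0 : Fin n → ℝ) ⬝ᵥ x := by rw [hvm, hUz]
      _ = 0 := zero_dotProduct x
  -- the orthogonal-complement-intersection submodule
  set S : Submodule ℝ (Fin n → ℝ) := W ⊓ ⨅ z ∈ V, LinearMap.ker (dotL z) with hS
  have hmemS : ∀ x, x ∈ S ↔ x ∈ W ∧ ∀ z ∈ V, x ⬝ᵥ z = 0 := by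
    intro x
    simp [hS, Submodule.mem_inf, Submodule.mem_iInf, dotL, LinearMap.mem_ker]
  have hrangeS : LinearMap.range U.mulVecLin ≤ S := by
    rintro _ ⟨x, rfl⟩
    exact (hmemS _).mpr ⟨hrange ⟨x, rfl⟩, horth x⟩
  have hSV : S ⊓ V = ⊥ := by
    rw [Submodule.eq_bot_iff]
    rintro x ⟨hxS, hxV⟩
    have : x ⬝ᵥ x = 0 := ((hmemS x).mp hxS).2 x hxV
    exact (dotProduct_self_eq_zero).mp this
  have hSW : S ≤ W := inf_le_left
  have hdimW : Module.finrank ℝ W = k + 1 := hdim (k + 1) le_rfl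
  have hdimV : Module.finrank ℝ V = k - 1 := hdim (k - 1) (by omega)
  have hsum : Module.finrank ℝ S + Module.finrank ℝ V
      = Module.finrank ℝ ↥(S ⊔ V) + Module.finrank ℝ ↥(S ⊓ V) :=
    (Submodule.finrank_sup_add_finrank_inf_eq S V).symm
  have hbot : Module.finrank ℝ ↥(S ⊓ V) = 0 := by rw [hSV]; simp
  have hle : Module.finrank ℝ ↥(S ⊔ V) ≤ k + 1 := by
    rw [← hdimW]
    exact Submodule.finrank_mono (sup_le hSW hVW)
  have hSrank : Module.finrank ℝ S ≤ 2 := by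
    rw [hdimV] at hsum
    omega
  constructor
  · intro y hy
    exact (hmemS y).mp (hrangeS hy)
  · calc U.rank = Module.finrank ℝ (LinearMap.range U.mulVecLin) := rfl
      _ ≤ Module.finrank ℝ S := Submodule.finrank_mono hrangeS
      _ ≤ 2 := hSrank
end

section
/- Let Hp and Bp be linearly independent vectors with pᵀHp ≠ 0 and pᵀBp ≠ 0, and let U = (a b) M (a b)ᵀ with a = Hp/(pᵀHp), b = Bp/(pᵀBp) and M a symmetric 2×2 matrix with entries m₁₁, m₁₂, m₂₂. Then Up = Hp - Bp holds if and only if m₁₁ + m₁₂ = pᵀHp and m₁₂ + m₂₂ = -pᵀBp. -/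
open Matrix

/-- For `U = (a b) M (a b)ᵀ` with `a = Hp/(pᵀHp)`, `b = Bp/(pᵀBp)` and symmetric
2×2 `M`, the quasi-Newton condition `Up = Hp - Bp` holds iff
`m₁₁ + m₁₂ = pᵀHp` and `m₁₂ + m₂₂ = -pᵀBp`. -/
theorem qn_condition_iff {n : ℕ} (H B : Matrix (Fin n) (Fin n) ℝ) (p : Fin n → ℝ)
    (hH : p ⬝ᵥ (H *ᵥ p) ≠ 0) (hB : p ⬝ᵥ (B *ᵥ p) ≠ 0)
    (hind : LinearIndependent ℝ ![H *ᵥ p, B *ᵥ p])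
    (a b : Fin n → ℝ)
    (ha : a = (p ⬝ᵥ (H *ᵥ p))⁻¹ • (H *ᵥ p))
    (hb : b = (p ⬝ᵥ (B *ᵥ p))⁻¹ • (B *ᵥ p))
    (m₁₁ m₁₂ m₂₂ : ℝ)
    (U : Matrix (Fin n) (Fin n) ℝ)
    (hU : U = (Matrix.of fun i (j : Fin 2) => ![a i, b i] j) *
        !![m₁₁, m₁₂; m₁₂, m₂₂] *
        (Matrix.of fun i (j : Fin 2) => ![a i, b i] j)ᵀ) :
    U *ᵥ p = H *ᵥ p - B *ᵥ p ↔
      m₁₁ + m₁₂ = p ⬝ᵥ (H *ᵥ p) ∧ m₁₂ + m₂₂ = -(p ⬝ᵥ (B *ᵥ p)) := by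
  set α := p ⬝ᵥ (H *ᵥ p) with hα
  set β := p ⬝ᵥ (B *ᵥ p) with hβ
  set A : Matrix (Fin n) (Fin 2) ℝ := Matrix.of fun i (j : Fin 2) => ![a i, b i] j with hA
  have hap : a ⬝ᵥ p = 1 := by
    rw [ha, smul_dotProduct, dotProduct_comm, smul_eq_mul, inv_mul_cancel₀ hH]
  have hbp : b ⬝ᵥ p = 1 := by
    rw [hb, smul_dotProduct, dotProduct_comm, smul_eq_mul, inv_mul_cancel₀ hB]
  have h1 : Aᵀ *ᵥ p = ![1, 1] := by
    funext j
    fin_cases j <;>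
      simp only [hA, Matrix.mulVec, Matrix.transpose_apply, Matrix.of_apply, dotProduct,
        Matrix.cons_val_zero, Matrix.cons_val_one, Matrix.head_cons, Fin.isValue] <;>
      simpa [dotProduct] using (by assumption : _ ⬝ᵥ p = 1)
  have h2 : !![m₁₁, m₁₂; m₁₂, m₂₂] *ᵥ ![(1:ℝ), 1] = ![m₁₁ + m₁₂, m₁₂ + m₂₂] := by
    funext j; fin_cases j <;> simp [Matrix.mulVec, dotProduct, Fin.sum_univ_two]
  have h3 : U *ᵥ p = (m₁₁ + m₁₂) • a + (m₁₂ + m₂₂) • b := by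
    rw [hU, ← Matrix.mulVec_mulVec, ← Matrix.mulVec_mulVec, h1, h2]
    funext i
    simp [hA, Matrix.mulVec, dotProduct, Fin.sum_univ_two, mul_comm]
  have h4 : U *ᵥ p = ((m₁₁ + m₁₂) * α⁻¹) • (H *ᵥ p) + ((m₁₂ + m₂₂) * β⁻¹) • (B *ᵥ p) := by
    rw [h3, ha, hb, smul_smul, smul_smul]
  rw [h4]
  constructor
  · intro h
    have h5 : (((m₁₁ + m₁₂) * α⁻¹ - 1) • (H *ᵥ p) + ((m₁₂ + m₂₂) * β⁻¹ + 1) • (B *ᵥ p)) = 0 := by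
      rw [sub_smul, add_smul, one_smul, one_smul]
      rw [show ((m₁₁ + m₁₂) * α⁻¹) • (H *ᵥ p) - H *ᵥ p + (((m₁₂ + m₂₂) * β⁻¹) • (B *ᵥ p) + B *ᵥ p)
          = ((m₁₁ + m₁₂) * α⁻¹) • (H *ᵥ p) + ((m₁₂ + m₂₂) * β⁻¹) • (B *ᵥ p) - (H *ᵥ p - B *ᵥ p) by
        abel]
      rw [h]; simp
    have := Fintype.linearIndependent_iff.mp hind
      ![(m₁₁ + m₁₂) * α⁻¹ - 1, (m₁₂ + m₂₂) * β⁻¹ + 1] ?_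
    · have e0 := this 0
      have e1 := this 1
      simp only [Matrix.cons_val_zero, Matrix.cons_val_one, Matrix.head_cons] at e0 e1
      constructor
      · have : (m₁₁ + m₁₂) * α⁻¹ = 1 := by linarith
        field_simp at this; linarith
      · have : (m₁₂ + m₂₂) * β⁻¹ = -1 := by linarith
        field_simp at this; linarith
    · rw [Fin.sum_univ_two]; simpa using h5
  · rintro ⟨h5, h6⟩
    rw [h5, h6, mul_inv_cancel₀ hH, one_smul]
    rw [show -β * β⁻¹ = -(β * β⁻¹) by ring, mul_inv_cancel₀ hB]
    simp [sub_eq_add_neg]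
end

section
/- Suppose a symmetric matrix U satisfies: range(U) ⊆ span{Hp, Bp}, U annihilates every vector orthogonal to both Hp and Bp, and Up = Hp - Bp, where Hp and Bp are linearly independent, pᵀHp ≠ 0, pᵀBp ≠ 0. Then there exists a scalar φ such that U = (Hp)(Hp)ᵀ/(pᵀHp) - (Bp)(Bp)ᵀ/(pᵀBp) + φ(pᵀBp)wwᵀ with w = Hp/(pᵀHp) - Bp/(pᵀBp), i.e. U belongs to the one-parameter Broyden family. -/
open Matrix

/-- The vector `w = Hp/(pᵀHp) - Bp/(pᵀBp)`. -/
noncomputable def broydenW {n : ℕ} (H B : Matrix (Fin n) (Fin n) ℝ) (p : Fin n → ℝ) : Fin n → ℝ :=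
  (p ⬝ᵥ (H *ᵥ p))⁻¹ • (H *ᵥ p) - (p ⬝ᵥ (B *ᵥ p))⁻¹ • (B *ᵥ p)

/-- The one-parameter Broyden family of updates
`U(φ) = HppᵀH/(pᵀHp) - BppᵀB/(pᵀBp) + φ(pᵀBp)wwᵀ`. -/
noncomputable def broydenUpdate {n : ℕ} (H B : Matrix (Fin n) (Fin n) ℝ) (p : Fin n → ℝ)
    (φ : ℝ) : Matrix (Fin n) (Fin n) ℝ :=
  (p ⬝ᵥ (H *ᵥ p))⁻¹ • vecMulVec (H *ᵥ p) (H *ᵥ p) -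
    (p ⬝ᵥ (B *ᵥ p))⁻¹ • vecMulVec (B *ᵥ p) (B *ᵥ p) +
    (φ * (p ⬝ᵥ (B *ᵥ p))) • vecMulVec (broydenW H B p) (broydenW H B p)

/-- A symmetric matrix with range in `span{Hp, Bp}`, annihilating the orthogonal
complement of `{Hp, Bp}`, and satisfying the quasi-Newton condition `Up = Hp - Bp`,
belongs to the one-parameter Broyden family. -/
theorem broyden_complete {n : ℕ} (H B : Matrix (Fin n) (Fin n) ℝ)
    (hHsymm : H.IsSymm) (hBsymm : B.IsSymm) (p : Fin n → ℝ)
    (hH : p ⬝ᵥ (H *ᵥ p) ≠ 0) (hB : p ⬝ᵥ (B *ᵥ p) ≠ 0)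
    (hind : LinearIndependent ℝ ![H *ᵥ p, B *ᵥ p])
    (U : Matrix (Fin n) (Fin n) ℝ) (hUsymm : U.IsSymm)
    (hrange : LinearMap.range U.mulVecLin ≤ Submodule.span ℝ {H *ᵥ p, B *ᵥ p})
    (hnull : ∀ x : Fin n → ℝ, (H *ᵥ p) ⬝ᵥ x = 0 → (B *ᵥ p) ⬝ᵥ x = 0 → U *ᵥ x = 0)
    (hqn : U *ᵥ p = H *ᵥ p - B *ᵥ p) :
    ∃ φ : ℝ, U = broydenUpdate H B p φ := by
  set h : Fin n → ℝ := H *ᵥ p with hhdef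
  set b : Fin n → ℝ := B *ᵥ p with hbdef
  have hpair : ∀ s t : ℝ, s • h + t • b = 0 → s = 0 ∧ t = 0 :=
    LinearIndependent.pair_iff.mp hind
  set g11 : ℝ := h ⬝ᵥ h with hg11
  set g12 : ℝ := h ⬝ᵥ b with hg12
  set g22 : ℝ := b ⬝ᵥ b with hg22
  set Δ : ℝ := g11 * g22 - g12 ^ 2 with hΔdef
  have e11 : h ⬝ᵥ h = g11 := rfl
  have e12 : h ⬝ᵥ b = g12 := rfl
  have e21 : b ⬝ᵥ h = g12 := dotProduct_comm b h
  have e22 : b ⬝ᵥ b = g22 := rfl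
  have hΔ : Δ ≠ 0 := by
    intro h0
    have hv : (g22 • h - g12 • b) ⬝ᵥ (g22 • h - g12 • b) = 0 := by
      simp only [dotProduct_sub, dotProduct_smul, sub_dotProduct, smul_dotProduct,
        smul_eq_mul]
      rw [hΔdef] at h0
      rw [e21, e11, e12, e22]
      linear_combination g22 * h0
    have hv0 : g22 • h - g12 • b = 0 := dotProduct_self_eq_zero.mp hv
    have := hpair g22 (-g12) (by rw [neg_smul, ← sub_eq_add_neg]; exact hv0)
    have hb0 : b = 0 := dotProduct_self_eq_zero.mp (by simpa using this.1 : g22 = 0)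
    exact one_ne_zero (hpair 0 1 (by simp [hb0])).2
  -- dual vectors
  set x₁ : Fin n → ℝ := Δ⁻¹ • (g22 • h - g12 • b) with hx1def
  set x₂ : Fin n → ℝ := Δ⁻¹ • (g11 • b - g12 • h) with hx2def
  have hx1h : h ⬝ᵥ x₁ = 1 := by
    rw [hx1def]
    simp only [dotProduct_smul, dotProduct_sub, smul_eq_mul, e11, e12]
    rw [hΔdef]; field_simp; exact div_self (by rw [← hΔdef]; exact hΔ)
  have hx1b : b ⬝ᵥ x₁ = 0 := by
    rw [hx1def]
    simp only [dotProduct_smul, dotProduct_sub, smul_eq_mul, e21, e22]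
    ring
  have hx2h : h ⬝ᵥ x₂ = 0 := by
    rw [hx2def]
    simp only [dotProduct_smul, dotProduct_sub, smul_eq_mul, e11, e12]
    ring
  have hx2b : b ⬝ᵥ x₂ = 1 := by
    rw [hx2def]
    simp only [dotProduct_smul, dotProduct_sub, smul_eq_mul, e21, e22]
    rw [hΔdef]; field_simp; exact div_self (by rw [← hΔdef]; exact hΔ)
  -- key decomposition
  have key : ∀ x : Fin n → ℝ,
      U *ᵥ x = (h ⬝ᵥ x) • (U *ᵥ x₁) + (b ⬝ᵥ x) • (U *ᵥ x₂) := by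
    intro x
    have hy : U *ᵥ (x - (h ⬝ᵥ x) • x₁ - (b ⬝ᵥ x) • x₂) = 0 := by
      apply hnull
      · simp only [dotProduct_sub, dotProduct_smul, smul_eq_mul, hx1h, hx1b, hx2h, hx2b]
        ring
      · simp only [dotProduct_sub, dotProduct_smul, smul_eq_mul, hx1h, hx1b, hx2h, hx2b]
        ring
    have hlin : U.mulVecLin (x - (h ⬝ᵥ x) • x₁ - (b ⬝ᵥ x) • x₂)
        = U.mulVecLin x - (h ⬝ᵥ x) • U.mulVecLin x₁ - (b ⬝ᵥ x) • U.mulVecLin x₂ := by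
      simp only [map_sub, _root_.map_smul]
    simp only [Matrix.mulVecLin_apply] at hlin
    rw [hy] at hlin
    rw [eq_comm, sub_sub, sub_eq_zero] at hlin
    exact hlin

  -- span representations
  obtain ⟨a, c, hu1⟩ := Submodule.mem_span_pair.mp
    (hrange (LinearMap.mem_range.mpr ⟨x₁, Matrix.mulVecLin_apply _ _⟩))
  obtain ⟨d, e, hu2⟩ := Submodule.mem_span_pair.mp
    (hrange (LinearMap.mem_range.mpr ⟨x₂, Matrix.mulVecLin_apply _ _⟩))
  -- symmetry
  have symmbil : ∀ x y : Fin n → ℝ, x ⬝ᵥ (U *ᵥ y) = y ⬝ᵥ (U *ᵥ x) := by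
    intro x y
    rw [dotProduct_mulVec]
    nth_rewrite 1 [← hUsymm]
    rw [vecMul_transpose]
    exact dotProduct_comm _ _
  have hcd : c = d := by
    have h1 : x₂ ⬝ᵥ (U *ᵥ x₁) = c := by
      rw [← hu1]
      simp only [dotProduct_add, dotProduct_smul, smul_eq_mul,
        dotProduct_comm x₂ h, dotProduct_comm x₂ b, hx2h, hx2b]
      ring
    have h2 : x₁ ⬝ᵥ (U *ᵥ x₂) = d := by
      rw [← hu2]
      simp only [dotProduct_add, dotProduct_smul, smul_eq_mul,
        dotProduct_comm x₁ h, dotProduct_comm x₁ b, hx1h, hx1b]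
      ring
    rw [← h1, ← h2, symmbil]
  set σ : ℝ := p ⬝ᵥ h with hσ
  set τ : ℝ := p ⬝ᵥ b with hτ
  -- equations from the quasi-Newton condition
  have E : (σ * a + τ * d) • h + (σ * c + τ * e) • b = h - b := by
    have E0 := key p
    rw [hqn, ← hu1, ← hu2, dotProduct_comm h p, dotProduct_comm b p, ← hσ, ← hτ] at E0
    rw [E0]; module
  have heq := hpair (σ * a + τ * d - 1) (σ * c + τ * e + 1) (by
    have : (σ * a + τ * d - 1) • h + (σ * c + τ * e + 1) • b
        = ((σ * a + τ * d) • h + (σ * c + τ * e) • b) - (h - b) := by module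
    rw [this, E, sub_self])
  have eq1 : σ * a + τ * d = 1 := by linarith [heq.1]
  have eq2 : σ * c + τ * e = -1 := by linarith [heq.2]
  refine ⟨-c * σ, ?_⟩
  have key' : ∀ x : Fin n → ℝ,
      U *ᵥ x = (h ⬝ᵥ x) • (a • h + c • b) + (b ⬝ᵥ x) • (d • h + e • b) := by
    intro x; rw [key x, hu1, hu2]
  ext i j
  have hUij := congrFun (key' (Pi.single j 1)) i
  simp only [dotProduct_single, mul_one, Pi.add_apply, Pi.smul_apply, smul_eq_mul] at hUij
  have hUij' : U i j = h j * (a * h i + c * b i) + b j * (d * h i + e * b i) := by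
    have hms := congrFun (mulVec_single U j 1) i
    simp only [MulOpposite.op_one, one_smul] at hms
    change _ = U i j at hms
    rw [← hms, hUij]
  rw [hUij']
  have ha : a = (1 - τ * d) / σ := by field_simp; linarith [eq1]
  have he : e = (-1 - σ * c) / τ := by field_simp; linarith [eq2]
  simp only [broydenUpdate, broydenW, ← hhdef, ← hbdef, ← hσ, ← hτ]
  simp only [Matrix.add_apply, Matrix.sub_apply, Matrix.smul_apply, vecMulVec_apply,
    Pi.sub_apply, Pi.smul_apply, smul_eq_mul]
  rw [ha, he, hcd]
  field_simp
  ring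
end

section
/- With g = -Bp, g₊ = αHp + g, α = (pᵀBp)/(pᵀHp), the Broyden update U(φ) can be rewritten as U(φ) = (g g₊) N (g g₊)ᵀ where N is the symmetric 2×2 matrix with entries N₁₁ = pᵀHp/(pᵀBp)² - 1/(pᵀBp), N₁₂ = N₂₁ = -pᵀHp/(pᵀBp)², N₂₂ = pᵀHp/(pᵀBp)² + φ/(pᵀBp). -/
open Matrix

/-- The Broyden update `U(φ)` can be rewritten as `(g g₊) N (g g₊)ᵀ` with
`g = -Bp`, `g₊ = ((pᵀBp)/(pᵀHp))Hp - Bp` and `N` the indicated symmetric 2×2 matrix. -/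
theorem broyden_gradient_form {n : ℕ} (H B : Matrix (Fin n) (Fin n) ℝ)
    (hHsymm : H.IsSymm) (hBsymm : B.IsSymm) (p : Fin n → ℝ)
    (hH : p ⬝ᵥ (H *ᵥ p) ≠ 0) (hB : p ⬝ᵥ (B *ᵥ p) ≠ 0)
    (g gp : Fin n → ℝ) (hg : g = -(B *ᵥ p))
    (hgp : gp = ((p ⬝ᵥ (B *ᵥ p)) / (p ⬝ᵥ (H *ᵥ p))) • (H *ᵥ p) - B *ᵥ p)
    (φ : ℝ) :
    broydenUpdate H B p φ =
      (Matrix.of fun i (j : Fin 2) => ![g i, gp i] j) *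
        !![(p ⬝ᵥ (H *ᵥ p)) / (p ⬝ᵥ (B *ᵥ p)) ^ 2 - 1 / (p ⬝ᵥ (B *ᵥ p)),
            -((p ⬝ᵥ (H *ᵥ p)) / (p ⬝ᵥ (B *ᵥ p)) ^ 2);
           -((p ⬝ᵥ (H *ᵥ p)) / (p ⬝ᵥ (B *ᵥ p)) ^ 2),
            (p ⬝ᵥ (H *ᵥ p)) / (p ⬝ᵥ (B *ᵥ p)) ^ 2 + φ / (p ⬝ᵥ (B *ᵥ p))] *
        (Matrix.of fun i (j : Fin 2) => ![g i, gp i] j)ᵀ := by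
  subst hg hgp
  ext i j
  simp only [broydenUpdate, broydenW, Matrix.mul_apply, Matrix.transpose_apply,
    Matrix.of_apply, Fin.sum_univ_two, Matrix.add_apply, Matrix.sub_apply,
    Matrix.smul_apply, Matrix.vecMulVec_apply, Pi.sub_apply, Pi.smul_apply, Pi.neg_apply,
    smul_eq_mul, Matrix.cons_val', Matrix.cons_val_zero, Matrix.cons_val_one,
    Matrix.head_cons, Matrix.empty_val', Matrix.cons_val_fin_one, Matrix.head_fin_const,
    Matrix.of_apply]
  field_simp
  ring
end
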